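/- Fix real numbers δ, ρ with ρ ≠ 0, and real-valued differentiable functions T_U(t), T_I(t). For τ ∈ ℝ define T_U'(t,τ) = T_U(t) + T_I(t) - (T_I(t)/ρ)(δ e^{-ρτ} + ρ - δ), T_I'(t,τ) = (T_I(t)/ρ)(δ e^{-ρτ} + ρ - δ), and δ'(τ) = δρ / ((ρ - δ)e^{ρτ} + δ) (assuming the denominator is nonzero). Then ∂T_U'/∂τ = T_I' · δ' and ∂T_I'/∂τ = -T_I' · δ'. -/

import Mathlib

theorem stmt_2 (δ ρ : ℝ) (hρ : ρ ≠ 0)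
    (T_U T_I : ℝ → ℝ) (hTU : Differentiable ℝ T_U) (hTI : Differentiable ℝ T_I)
    (T_U' T_I' : ℝ → ℝ → ℝ) (δ' : ℝ → ℝ)
    (hTU' : ∀ t τ, T_U' t τ =
      T_U t + T_I t - (T_I t / ρ) * (δ * Real.exp (-ρ * τ) + ρ - δ))
    (hTI' : ∀ t τ, T_I' t τ = (T_I t / ρ) * (δ * Real.exp (-ρ * τ) + ρ - δ))
    (hδ' : ∀ τ, δ' τ = δ * ρ / ((ρ - δ) * Real.exp (ρ * τ) + δ))
    (t τ : ℝ) (hden : (ρ - δ) * Real.exp (ρ * τ) + δ ≠ 0) :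
    HasDerivAt (fun s => T_U' t s) (T_I' t τ * δ' τ) τ ∧
    HasDerivAt (fun s => T_I' t s) (-(T_I' t τ * δ' τ)) τ := by
  have hexp : HasDerivAt (fun s : ℝ => Real.exp (-ρ * s)) (-ρ * Real.exp (-ρ * τ)) τ := by
    have := (Real.hasDerivAt_exp (-ρ * τ)).comp τ ((hasDerivAt_id τ).const_mul (-ρ))
    have h2 : (Real.exp ∘ HMul.hMul (-ρ)) = fun s => Real.exp (-ρ * s) := by
      funext s; simp [Function.comp]
    rw [h2] at this
    simpa [mul_comm] using this
  have hI : HasDerivAt (fun s => T_I' t s) (-(T_I t * δ * Real.exp (-ρ * τ))) τ := by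
    have h : HasDerivAt (fun s : ℝ => (T_I t / ρ) * (δ * Real.exp (-ρ * s) + ρ - δ))
        ((T_I t / ρ) * (δ * (-ρ * Real.exp (-ρ * τ)))) τ :=
      (((hexp.const_mul δ).add_const ρ).sub_const δ).const_mul (T_I t / ρ)
    have heq : (T_I t / ρ) * (δ * (-ρ * Real.exp (-ρ * τ)))
        = -(T_I t * δ * Real.exp (-ρ * τ)) := by field_simp
    rw [funext fun s => hTI' t s]
    exact heq ▸ h
  have hval : T_I' t τ * δ' τ = T_I t * δ * Real.exp (-ρ * τ) := by
    rw [hTI', hδ']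
    have he : Real.exp (-ρ * τ) * Real.exp (ρ * τ) = 1 := by
      rw [← Real.exp_add]; ring_nf; exact Real.exp_zero
    field_simp
    simp only [neg_mul] at he ⊢
    linear_combination (-(T_I t * δ * (ρ - δ))) * he
  constructor
  · have hU : HasDerivAt (fun s => T_U' t s)
        (-(-(T_I t * δ * Real.exp (-ρ * τ)))) τ := by
      rw [funext fun s => hTU' t s]
      have := ((hasDerivAt_const τ (T_U t + T_I t)).sub
        (by rw [funext fun s => hTI' t s] at hI; exact hI))
      simpa [mul_comm, Pi.sub_def] using this
    rw [hval]
    simpa using hU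
  · rw [hval]; exact hI
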